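/- Let F be a measure on ℝ^d \ {0} with ∫(|x|²∧1)F(dx) < ∞ and ∫_{|x|>1}|x|F(dx) < ∞, and let φ̃ ∈ ℝ^d satisfy 1 + φ̃ᵀx > 0 for F-a.e. x. Then the integral ∫ [φ̃ᵀx/(1+φ̃ᵀx) − φ̃ᵀh(x)] F(dx) is well defined with values in [−∞, +∞), and equals −∫_{|x|≤1} (φ̃ᵀx)²/(1+φ̃ᵀx) F(dx) − ∫_{|x|>1} 1/(1+φ̃ᵀx) F(dx) + F({|x|>1}). -/

import Mathlib

open MeasureTheory
open scoped RealInnerProductSpace ENNReal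

private lemma ereal_coe_ennreal_eq (x : ℝ≥0∞) (hx : x ≠ ⊤) :
    ((x : ℝ≥0∞) : EReal) = ((x.toReal : ℝ) : EReal) := by
  rw [← EReal.toReal_coe_ennreal (x := x), EReal.coe_toReal]
  · simp [hx]
  · exact (EReal.coe_ennreal_nonneg x).trans_lt' (by simp) |>.ne'

private lemma aux_div_sub (a : ℝ) (ha : 1 + a ≠ 0) :
    a / (1 + a) - a = -(a ^ 2 / (1 + a)) := by
  field_simp
  ring

private lemma aux_div_one_sub (a : ℝ) (ha : 1 + a ≠ 0) :
    a / (1 + a) = 1 - 1 / (1 + a) := by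
  field_simp
  ring

private lemma ofReal_one_sub_add (s : ℝ) (hs : 0 ≤ s) :
    ENNReal.ofReal (1 - s) + ENNReal.ofReal s = 1 + ENNReal.ofReal (s - 1) := by
  rcases le_or_gt s 1 with h | h
  · rw [ENNReal.ofReal_eq_zero.2 (by linarith : s - 1 ≤ 0), add_zero,
      ← ENNReal.ofReal_one, ← ENNReal.ofReal_add (by linarith) hs]
    norm_num
  · rw [ENNReal.ofReal_eq_zero.2 (by linarith : 1 - s ≤ 0), zero_add,
      ← ENNReal.ofReal_one, ← ENNReal.ofReal_add (by norm_num) (by linarith : (0:ℝ) ≤ s - 1)]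
    norm_num

theorem stmt_15 (d : ℕ)
    (F : Measure (EuclideanSpace ℝ (Fin d))) [SigmaFinite F]
    (hF0 : F {0} = 0)
    (hF1 : ∫⁻ x, ENNReal.ofReal (min (‖x‖ ^ 2) 1) ∂F < ⊤)
    (hF2 : ∫⁻ x in {x | 1 < ‖x‖}, ENNReal.ofReal ‖x‖ ∂F < ⊤)
    (φ : EuclideanSpace ℝ (Fin d))
    (hφ : ∀ᵐ x ∂F, 0 < 1 + ⟪φ, x⟫)
    (g : EuclideanSpace ℝ (Fin d) → ℝ)
    (hg : ∀ x, g x = ⟪φ, x⟫ / (1 + ⟪φ, x⟫) - (if ‖x‖ ≤ 1 then ⟪φ, x⟫ else 0)) :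
    -- the integral ∫ g dF is well defined with values in [−∞, +∞):
    (∫⁻ x, ENNReal.ofReal (g x) ∂F) < ⊤ ∧
    -- and it equals  F({|x|>1}) − ∫_{|x|≤1} (φᵀx)²/(1+φᵀx) dF − ∫_{|x|>1} 1/(1+φᵀx) dF :
    ((∫⁻ x, ENNReal.ofReal (g x) ∂F : ℝ≥0∞) : EReal)
        - ((∫⁻ x, ENNReal.ofReal (-(g x)) ∂F : ℝ≥0∞) : EReal)
      = ((F {x | 1 < ‖x‖} : ℝ≥0∞) : EReal)
        - ((∫⁻ x in {x | ‖x‖ ≤ 1}, ENNReal.ofReal (⟪φ, x⟫ ^ 2 / (1 + ⟪φ, x⟫)) ∂F : ℝ≥0∞) : EReal)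
        - ((∫⁻ x in {x | 1 < ‖x‖}, ENNReal.ofReal (1 / (1 + ⟪φ, x⟫)) ∂F : ℝ≥0∞) : EReal) := by
  classical
  set S : Set (EuclideanSpace ℝ (Fin d)) := {x | ‖x‖ ≤ 1} with hSdef
  have hS : MeasurableSet S := measurableSet_le measurable_norm measurable_const
  have hUc : {x : EuclideanSpace ℝ (Fin d) | 1 < ‖x‖} = Sᶜ := by
    ext x; simp [hSdef, not_le]
  have hU : MeasurableSet {x : EuclideanSpace ℝ (Fin d) | 1 < ‖x‖} := by
    rw [hUc]; exact hS.compl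
  -- measurability of g
  have hm1 : Measurable fun x : EuclideanSpace ℝ (Fin d) => ⟪φ, x⟫ :=
    (continuous_const.inner continuous_id).measurable
  have hmg : Measurable g := by
    have : g = fun x => ⟪φ, x⟫ / (1 + ⟪φ, x⟫) - (if ‖x‖ ≤ 1 then ⟪φ, x⟫ else 0) :=
      funext hg
    rw [this]
    exact ((hm1.div (measurable_const.add hm1)).sub
      (Measurable.ite hS hm1 measurable_const))
  have hmf1 : Measurable fun x => ENNReal.ofReal (g x) := ENNReal.measurable_ofReal.comp hmg
  -- F(U) < ⊤
  have hFU : F {x : EuclideanSpace ℝ (Fin d) | 1 < ‖x‖} < ⊤ := by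
    have h1 : F {x : EuclideanSpace ℝ (Fin d) | 1 < ‖x‖}
        = ∫⁻ _ in {x : EuclideanSpace ℝ (Fin d) | 1 < ‖x‖}, 1 ∂F :=
      (setLIntegral_one _).symm
    rw [h1]
    refine lt_of_le_of_lt ?_ hF1
    rw [← lintegral_add_compl (fun x => ENNReal.ofReal (min (‖x‖ ^ 2) 1)) hU]
    refine le_trans (setLIntegral_mono (ENNReal.measurable_ofReal.comp
      ((measurable_norm.pow_const 2).min measurable_const)) ?_) le_self_add
    intro x hx
    have hx1 : (1:ℝ) < ‖x‖ := hx
    have : (1:ℝ) ≤ min (‖x‖ ^ 2) 1 := by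
      refine le_min ?_ le_rfl
      nlinarith
    calc (1:ℝ≥0∞) = ENNReal.ofReal 1 := by simp
      _ ≤ ENNReal.ofReal (min (‖x‖ ^ 2) 1) := ENNReal.ofReal_le_ofReal this
  -- pointwise facts on S
  have haeS : ∀ᵐ x ∂F, ‖x‖ ≤ 1 →
      (ENNReal.ofReal (g x) = 0 ∧
       ENNReal.ofReal (-(g x)) = ENNReal.ofReal (⟪φ, x⟫ ^ 2 / (1 + ⟪φ, x⟫))) := by
    filter_upwards [hφ] with x hx hx1
    have hne : (1 + ⟪φ, x⟫) ≠ 0 := ne_of_gt hx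
    have hgx : g x = -(⟪φ, x⟫ ^ 2 / (1 + ⟪φ, x⟫)) := by
      rw [hg x, if_pos hx1]
      exact aux_div_sub _ hne
    constructor
    · rw [hgx, ENNReal.ofReal_eq_zero]
      simp only [neg_nonpos]
      positivity
    · rw [hgx, neg_neg]
  -- pointwise facts on U
  have haeU : ∀ᵐ x ∂F, 1 < ‖x‖ →
      (ENNReal.ofReal (g x) + ENNReal.ofReal (1 / (1 + ⟪φ, x⟫))
          = 1 + ENNReal.ofReal (-(g x)) ∧
       ENNReal.ofReal (g x) ≤ 1) := by
    filter_upwards [hφ] with x hx hx1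
    have hne : (1 + ⟪φ, x⟫) ≠ 0 := ne_of_gt hx
    have hgx : g x = 1 - 1 / (1 + ⟪φ, x⟫) := by
      rw [hg x, if_neg (not_le.2 hx1)]
      rw [sub_zero]
      exact aux_div_one_sub _ hne
    have hs : (0:ℝ) ≤ 1 / (1 + ⟪φ, x⟫) := by positivity
    constructor
    · have := ofReal_one_sub_add (1 / (1 + ⟪φ, x⟫)) hs
      rw [hgx]
      convert this using 3
      ring
    · rw [hgx]
      calc ENNReal.ofReal (1 - 1 / (1 + ⟪φ, x⟫)) ≤ ENNReal.ofReal 1 :=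
            ENNReal.ofReal_le_ofReal (by linarith)
        _ = 1 := by simp
  -- integrals over S
  have hAS : ∫⁻ x in S, ENNReal.ofReal (g x) ∂F = 0 := by
    have : ∫⁻ x in S, ENNReal.ofReal (g x) ∂F = ∫⁻ _ in S, 0 ∂F := by
      refine lintegral_congr_ae ((ae_restrict_iff' hS).2 ?_)
      filter_upwards [haeS] with x hx hxS using (hx hxS).1
    rw [this, lintegral_zero]
  have hBS : ∫⁻ x in S, ENNReal.ofReal (-(g x)) ∂F
      = ∫⁻ x in S, ENNReal.ofReal (⟪φ, x⟫ ^ 2 / (1 + ⟪φ, x⟫)) ∂F := by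
    refine lintegral_congr_ae ((ae_restrict_iff' hS).2 ?_)
    filter_upwards [haeS] with x hx hxS using (hx hxS).2
  -- notation
  set A := ∫⁻ x, ENNReal.ofReal (g x) ∂F with hA
  set B := ∫⁻ x, ENNReal.ofReal (-(g x)) ∂F with hB
  set AU := ∫⁻ x in Sᶜ, ENNReal.ofReal (g x) ∂F with hAU
  set BU := ∫⁻ x in Sᶜ, ENNReal.ofReal (-(g x)) ∂F with hBU
  set I1 := ∫⁻ x in {x : EuclideanSpace ℝ (Fin d) | ‖x‖ ≤ 1},
      ENNReal.ofReal (⟪φ, x⟫ ^ 2 / (1 + ⟪φ, x⟫)) ∂F with hI1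
  set I2 := ∫⁻ x in {x : EuclideanSpace ℝ (Fin d) | 1 < ‖x‖},
      ENNReal.ofReal (1 / (1 + ⟪φ, x⟫)) ∂F with hI2
  set FU := F {x : EuclideanSpace ℝ (Fin d) | 1 < ‖x‖} with hFUdef
  have hAeq : A = AU := by
    rw [hA, ← lintegral_add_compl (fun x => ENNReal.ofReal (g x)) hS, hAS, zero_add]
  have hBeq : B = I1 + BU := by
    rw [hB, ← lintegral_add_compl (fun x => ENNReal.ofReal (-(g x))) hS, hBS]
  -- A finite
  have hAfin : A < ⊤ := by
    rw [hAeq, hAU]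
    refine lt_of_le_of_lt ?_ hFU
    have h1 : FU = ∫⁻ _ in Sᶜ, 1 ∂F := by
      rw [hFUdef, hUc]; exact (setLIntegral_one _).symm
    rw [h1]
    refine lintegral_mono_ae ((ae_restrict_iff' hS.compl).2 ?_)
    filter_upwards [haeU] with x hx hxU
    exact (hx (by simpa [hSdef, not_le] using hxU)).2
  -- the key identity
  have hkey : AU + I2 = FU + BU := by
    have e1 : ∫⁻ x in Sᶜ, (ENNReal.ofReal (g x) + ENNReal.ofReal (1 / (1 + ⟪φ, x⟫))) ∂F
        = ∫⁻ x in Sᶜ, (1 + ENNReal.ofReal (-(g x))) ∂F := by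
      refine lintegral_congr_ae ((ae_restrict_iff' hS.compl).2 ?_)
      filter_upwards [haeU] with x hx hxU
      exact (hx (by simpa [hSdef, not_le] using hxU)).1
    rw [lintegral_add_left hmf1, lintegral_add_left measurable_const,
      setLIntegral_one] at e1
    calc AU + I2
        = (∫⁻ x in Sᶜ, ENNReal.ofReal (g x) ∂F)
          + ∫⁻ x in Sᶜ, ENNReal.ofReal (1 / (1 + ⟪φ, x⟫)) ∂F := by
          rw [hAU, hI2, hUc]
      _ = F Sᶜ + ∫⁻ x in Sᶜ, ENNReal.ofReal (-(g x)) ∂F := e1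
      _ = FU + BU := by rw [hFUdef, hBU, hUc]
  refine ⟨hAfin, ?_⟩
  by_cases hI1top : I1 = ⊤
  · have hBtop : B = ⊤ := by rw [hBeq, hI1top, top_add]
    rw [hBtop, hI1top, EReal.coe_ennreal_top, EReal.sub_top, EReal.sub_top, EReal.bot_sub]
  · by_cases hI2top : I2 = ⊤
    · have hBUtop : BU = ⊤ := by
        by_contra h
        have : FU + BU < ⊤ := ENNReal.add_lt_top.2 ⟨hFU, lt_top_iff_ne_top.2 h⟩
        rw [← hkey, hI2top] at this
        simp at this
      have hBtop : B = ⊤ := by rw [hBeq, hBUtop, add_top]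
      rw [hBtop, hI2top, EReal.coe_ennreal_top, EReal.sub_top, EReal.sub_top]
    · -- all finite
      have hBUfin : BU ≠ ⊤ := by
        intro h
        have : AU + I2 = ⊤ := by rw [hkey, h, add_top]
        rw [ENNReal.add_eq_top] at this
        rcases this with h' | h'
        · exact (hAeq ▸ hAfin).ne (hAeq ▸ h')
        · exact hI2top h'
      have hAne : A ≠ ⊤ := hAfin.ne
      have hBne : B ≠ ⊤ := by rw [hBeq]; exact ENNReal.add_ne_top.2 ⟨hI1top, hBUfin⟩
      have hFUne : FU ≠ ⊤ := hFU.ne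
      -- real-valued equation
      have hreal : A.toReal + I2.toReal = FU.toReal + BU.toReal := by
        have := congrArg ENNReal.toReal (hAeq ▸ hkey)
        rwa [ENNReal.toReal_add hAne hI2top, ENNReal.toReal_add hFUne hBUfin] at this
      have hBreal : B.toReal = I1.toReal + BU.toReal := by
        rw [hBeq, ENNReal.toReal_add hI1top hBUfin]
      rw [ereal_coe_ennreal_eq A hAne, ereal_coe_ennreal_eq B hBne,
        ereal_coe_ennreal_eq FU hFUne, ereal_coe_ennreal_eq I1 hI1top,
        ereal_coe_ennreal_eq I2 hI2top]
      rw [← EReal.coe_sub, ← EReal.coe_sub, ← EReal.coe_sub]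
      norm_cast
      linarith
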